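/- Let 𝔞_1 > 𝔞_2 > 𝔟_1 > 𝔟_2 be reals with pairwise integer differences, and let c be the multiset obtained as the disjoint union of the underlying multisets of the two linear segments (𝔞_1, …, 𝔟_1) and (𝔞_2, …, 𝔟_2) (so every value of the step-one grid between 𝔟_2 and 𝔞_1 occurs, with multiplicity 2 for values in [𝔟_1, 𝔞_2] and multiplicity 1 otherwise); set N = (𝔞_1 − 𝔟_1 + 1) + (𝔞_2 − 𝔟_2 + 1). Consider any finite list of linear segments S_1, …, S_t, with S_i = (α_i, …, β_i) where α_i ≥ β_i and α_i − β_i ∈ ℕ, such that the disjoint union of their underlying multisets equals c and the midpoints s_i = (α_i + β_i)/2 are weakly decreasing in i; let λ_S ∈ ℝ^N be the concatenation of the constant blocks of value s_i and length α_i − β_i + 1. Let λ′ ∈ ℝ^N be the Langlands parameter of the pair (𝔞_1, …, 𝔟_2), (𝔞_2, …, 𝔟_1), its two constant blocks ordered so that the larger (or equal) value comes first. Then λ′ ≤_P λ_S for every such list S: the total sums agree and Σ_{i=1}^{k} ((λ_S)_i − λ′_i) ≥ 0 for every 1 ≤ k ≤ N. In other words, λ′ is the minimal Langlands parameter among all parameters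 with this cuspidal support. -/

import Mathlib

/-- The underlying multiset of the linear segment `(α, α-1, …, α-k)`. -/
def segMultiset (α : ℝ) (k : ℕ) : Multiset ℝ :=
  (Multiset.range (k + 1)).map (fun j => α - j)

/-- The midpoint of the linear segment `(α, α-1, …, α-k)`. -/
noncomputable def segMid (α : ℝ) (k : ℕ) : ℝ := (α + (α - k)) / 2

/-- The Langlands-parameter block list of a list of linear segments: each segment
`(α, α-1, …, α-k)` contributes its midpoint repeated `k+1` times. -/
noncomputable def segBlocks (L : List (ℝ × ℕ)) : List ℝ :=
  L.flatMap (fun s => List.replicate (s.2 + 1) (segMid s.1 s.2))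

namespace St5

def msum (L : List (ℝ × ℕ)) : Multiset ℝ := (L.map (fun s => segMultiset s.1 s.2)).sum

noncomputable def blocksM (L : List (ℝ × ℕ)) : Multiset ℝ :=
  (L.map (fun s => Multiset.replicate (s.2 + 1) (segMid s.1 s.2))).sum

lemma seg_def (α : ℝ) (k : ℕ) :
    segMultiset α k = (Multiset.range (k+1)).map (fun j : ℕ => α - (j:ℝ)) := by
  unfold segMultiset
  show Multiset.map _ ((Multiset.range (k+1)).bind fun a => {((a:ℕ):ℝ)}) = _
  rw [Multiset.bind_singleton, Multiset.map_map]
  rfl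

lemma mem_seg {x α : ℝ} {k : ℕ} : x ∈ segMultiset α k ↔ ∃ j : ℕ, j ≤ k ∧ x = α - j := by
  rw [seg_def]
  constructor
  · intro hx
    obtain ⟨a, ha, hax⟩ := Multiset.mem_map.mp hx
    exact ⟨a, Nat.lt_succ_iff.mp (Multiset.mem_range.mp ha), hax.symm⟩
  · rintro ⟨j, hj, rfl⟩
    exact Multiset.mem_map.mpr ⟨j, Multiset.mem_range.mpr (Nat.lt_succ_iff.mpr hj), rfl⟩

lemma seg_nodup (α : ℝ) (k : ℕ) : (segMultiset α k).Nodup := by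
  rw [seg_def]
  refine Multiset.Nodup.map ?_ (Multiset.nodup_range _)
  intro i j h
  have h' : (i : ℝ) = j := by
    have h2 : α - (i:ℝ) = α - (j:ℝ) := h
    linarith
  exact_mod_cast h'

lemma count_seg (α x : ℝ) (k : ℕ) :
    (segMultiset α k).count x = if ∃ j : ℕ, j ≤ k ∧ x = α - j then 1 else 0 := by
  split_ifs with h
  · exact Multiset.count_eq_one_of_mem (seg_nodup α k) (mem_seg.mpr h)
  · exact Multiset.count_eq_zero.mpr (fun hx => h (mem_seg.mp hx))

lemma seg_succ (α : ℝ) (k : ℕ) :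
    segMultiset α (k + 1) = (α - ((k:ℝ)+1)) ::ₘ segMultiset α k := by
  rw [seg_def, seg_def, Multiset.range_succ, Multiset.map_cons]
  congr 1
  push_cast
  ring

lemma seg_card (α : ℝ) (k : ℕ) : Multiset.card (segMultiset α k) = k + 1 := by
  rw [seg_def, Multiset.card_map, Multiset.card_range]

lemma seg_sum (α : ℝ) (k : ℕ) : (segMultiset α k).sum = (k + 1) * segMid α k := by
  induction k with
  | zero =>
      rw [seg_def]
      simp [segMid]
  | succ k ih =>
      rw [seg_succ, Multiset.sum_cons, ih]
      simp only [segMid]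
      push_cast
      ring

lemma seg_merge (α : ℝ) (k k' : ℕ) :
    segMultiset α (k + k' + 1) = segMultiset α k + segMultiset (α - k - 1) k' := by
  induction k' with
  | zero =>
      rw [seg_succ]
      have h0 : segMultiset (α - k - 1) 0 = {α - k - 1} := by
        rw [seg_def]
        simp
      rw [h0, add_comm (segMultiset α k) _, Multiset.singleton_add]
      congr 1
      push_cast
      ring
  | succ k' ih =>
      have h1 : k + (k' + 1) + 1 = (k + k' + 1) + 1 := by omega
      rw [h1, seg_succ, ih, seg_succ, Multiset.add_cons]
      congr 1
      push_cast
      ring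

lemma seg_jump (α x : ℝ) (k : ℕ) :
    ((segMultiset α k).count x : ℤ) - ((segMultiset α k).count (x - 1) : ℤ)
      = (if x = α - k then 1 else 0) - (if x = α + 1 then 1 else 0) := by
  have hknn : (0:ℝ) ≤ (k:ℝ) := by positivity
  rw [count_seg, count_seg]
  by_cases hA : ∃ j : ℕ, j ≤ k ∧ x = α - j <;>
    by_cases hB : ∃ j : ℕ, j ≤ k ∧ x - 1 = α - j
  · obtain ⟨j, hj, hxj⟩ := hA
    obtain ⟨j', hj', hxj'⟩ := hB
    rw [if_pos ⟨j, hj, hxj⟩, if_pos ⟨j', hj', hxj'⟩]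
    have h1 : x ≠ α - k := by
      intro h
      have hq : (j' : ℝ) = (k:ℝ) + 1 := by rw [h] at hxj'; linarith
      have : j' = k + 1 := by exact_mod_cast hq
      omega
    have h2 : x ≠ α + 1 := by
      intro h
      have hjneg : (j : ℝ) = -1 := by rw [h] at hxj; linarith
      have : (0:ℝ) ≤ (j:ℝ) := by positivity
      linarith
    rw [if_neg h1, if_neg h2]
    norm_num
  · obtain ⟨j, hj, hxj⟩ := hA
    have hjk : j = k := by
      by_contra hne
      have hlt : j + 1 ≤ k := by omega
      exact hB ⟨j + 1, hlt, by push_cast; linarith⟩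
    have h1 : x = α - k := by rw [hxj, hjk]
    have h2 : x ≠ α + 1 := by
      rw [h1]; intro h
      have : (k : ℝ) = -1 := by linarith
      linarith
    rw [if_pos ⟨j, hj, hxj⟩, if_neg hB, if_pos h1, if_neg h2]
    norm_num
  · obtain ⟨j', hj', hxj'⟩ := hB
    have hj0 : j' = 0 := by
      by_contra hne
      have hlt : j' - 1 ≤ k := by omega
      refine hA ⟨j' - 1, hlt, ?_⟩
      have h1r : (1:ℝ) ≤ (j':ℝ) := by exact_mod_cast Nat.one_le_iff_ne_zero.mpr hne
      push_cast [Nat.cast_sub (by omega : 1 ≤ j')]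
      linarith
    have h2 : x = α + 1 := by rw [hj0] at hxj'; push_cast at hxj'; linarith
    have h1 : x ≠ α - k := by
      rw [h2]; intro h
      have : (k : ℝ) = -1 := by linarith
      linarith
    rw [if_neg hA, if_pos ⟨j', hj', hxj'⟩, if_neg h1, if_pos h2]
    norm_num
  · have h1 : x ≠ α - k := fun h => hA ⟨k, le_refl _, h⟩
    have h2 : x ≠ α + 1 := fun h => hB ⟨0, Nat.zero_le _, by rw [h]; push_cast; ring⟩
    rw [if_neg hA, if_neg hB, if_neg h1, if_neg h2]
    norm_num

/-! ### blocks lemmas -/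

lemma segBlocks_cons (s : ℝ × ℕ) (L : List (ℝ × ℕ)) :
    segBlocks (s :: L) = List.replicate (s.2 + 1) (segMid s.1 s.2) ++ segBlocks L := by
  simp [segBlocks]

lemma blocksM_cons (s : ℝ × ℕ) (L : List (ℝ × ℕ)) :
    blocksM (s :: L) = Multiset.replicate (s.2 + 1) (segMid s.1 s.2) + blocksM L := by
  simp [blocksM]

lemma blocksM_coe (L : List (ℝ × ℕ)) : (segBlocks L : Multiset ℝ) = blocksM L := by
  induction L with
  | nil => simp [segBlocks, blocksM]
  | cons s L ih =>
      rw [segBlocks_cons]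
      have : ((List.replicate (s.2+1) (segMid s.1 s.2) ++ segBlocks L : List ℝ) : Multiset ℝ)
          = (List.replicate (s.2+1) (segMid s.1 s.2) : List ℝ) + (segBlocks L : Multiset ℝ) := by
        rfl
      rw [this, ih, blocksM_cons, Multiset.coe_replicate]

lemma msum_cons (s : ℝ × ℕ) (L : List (ℝ × ℕ)) :
    msum (s :: L) = segMultiset s.1 s.2 + msum L := by
  simp [msum]

lemma msum_perm {L L' : List (ℝ × ℕ)} (h : L.Perm L') : msum L = msum L' :=
  (h.map _).sum_eq

lemma blocksM_perm {L L' : List (ℝ × ℕ)} (h : L.Perm L') : blocksM L = blocksM L' :=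
  (h.map _).sum_eq

lemma card_blocksM (L : List (ℝ × ℕ)) :
    Multiset.card (blocksM L) = Multiset.card (msum L) := by
  induction L with
  | nil => simp [blocksM, msum]
  | cons s L ih =>
      simp [blocksM_cons, msum_cons, seg_card, ih]
      omega

lemma sum_blocksM (L : List (ℝ × ℕ)) : (blocksM L).sum = (msum L).sum := by
  induction L with
  | nil => simp [blocksM, msum]
  | cons s L ih =>
      rw [blocksM_cons, msum_cons, Multiset.sum_add, Multiset.sum_add, ih, seg_sum,
        Multiset.sum_replicate, nsmul_eq_mul]
      push_cast
      ring

lemma length_segBlocks (L : List (ℝ × ℕ)) :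
    (segBlocks L).length = Multiset.card (msum L) := by
  rw [← card_blocksM, ← blocksM_coe, Multiset.coe_card]

lemma mem_segBlocks {b : ℝ} {L : List (ℝ × ℕ)} (h : b ∈ segBlocks L) :
    ∃ s ∈ L, b = segMid s.1 s.2 := by
  simp only [segBlocks, List.mem_flatMap] at h
  obtain ⟨s, hs, hb⟩ := h
  exact ⟨s, hs, List.eq_of_mem_replicate hb⟩

lemma sorted_blocks {L : List (ℝ × ℕ)}
    (h : L.Pairwise (fun s t => segMid t.1 t.2 ≤ segMid s.1 s.2)) :
    (segBlocks L).Pairwise (· ≥ ·) := by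
  induction L with
  | nil => simp [segBlocks]
  | cons s L ih =>
      rw [List.pairwise_cons] at h
      rw [segBlocks_cons]
      rw [List.pairwise_append]
      refine ⟨List.pairwise_replicate.mpr (Or.inr (le_refl _)), ih h.2, ?_⟩
      intro x hx y hy
      obtain ⟨t, ht, rfl⟩ := mem_segBlocks hy
      rw [List.eq_of_mem_replicate hx]
      exact h.1 t ht

/-! ### sorted list prefix lemmas -/

noncomputable def Pf (l : List ℝ) (r : ℕ) : ℝ := ∑ j ∈ Finset.range r, l.getD j 0

lemma Pf_succ (l : List ℝ) (r : ℕ) : Pf l (r + 1) = Pf l r + l.getD r 0 :=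
  Finset.sum_range_succ _ _

lemma Pf_cons_succ (a : ℝ) (l : List ℝ) (r : ℕ) : Pf (a :: l) (r + 1) = a + Pf l r := by
  unfold Pf
  rw [Finset.sum_range_succ']
  simp [add_comm]

lemma Pf_eq_take (l : List ℝ) (r : ℕ) : Pf l r = (l.take r).sum := by
  induction l generalizing r with
  | nil => simp [Pf]
  | cons a l ih =>
      cases r with
      | zero => simp [Pf]
      | succ r => rw [Pf_cons_succ, List.take_succ_cons, List.sum_cons, ih]

lemma Pf_of_le_length {l : List ℝ} {r : ℕ} (h : l.length ≤ r) : Pf l r = l.sum := by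
  rw [Pf_eq_take, List.take_of_length_le h]

lemma getD_sorted {l : List ℝ} (hs : l.Pairwise (· ≥ ·)) {i j : ℕ}
    (hij : i ≤ j) (hj : j < l.length) : l.getD j 0 ≤ l.getD i 0 := by
  have hi : i < l.length := lt_of_le_of_lt hij hj
  rw [l.getD_eq_getElem 0 hj, l.getD_eq_getElem 0 hi]
  rcases eq_or_lt_of_le hij with rfl | hlt
  · exact le_refl _
  · exact List.pairwise_iff_get.mp hs ⟨i, hi⟩ ⟨j, hj⟩ hlt

lemma getD_mem_le_head {l : List ℝ} {a : ℝ} (hs : (a :: l).Pairwise (· ≥ ·)) {r : ℕ}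
    (hr : r < l.length) : l.getD r 0 ≤ a := by
  have := getD_sorted hs (Nat.zero_le (r+1)) (by simpa using Nat.succ_lt_succ hr)
  simpa using this

lemma prefix_avg {l : List ℝ} (hs : l.Pairwise (· ≥ ·)) {r m : ℕ}
    (hrm : r ≤ m) (hm : m ≤ l.length) : (r : ℝ) * Pf l m ≤ (m : ℝ) * Pf l r := by
  induction m, hrm using Nat.le_induction with
  | base => exact le_refl _
  | succ m hrm ih =>
      have hm' : m ≤ l.length := by omega
      have hmlt : m < l.length := by omega
      have hstep : (r:ℝ) * l.getD m 0 ≤ Pf l r := by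
        have : ∀ j ∈ Finset.range r, l.getD m 0 ≤ l.getD j 0 := by
          intro j hj
          rw [Finset.mem_range] at hj
          exact getD_sorted hs (by omega : j ≤ m) hmlt
        calc (r:ℝ) * l.getD m 0 = ∑ _j ∈ Finset.range r, l.getD m 0 := by
              rw [Finset.sum_const, Finset.card_range, nsmul_eq_mul]
          _ ≤ Pf l r := Finset.sum_le_sum this
      rw [Pf_succ]
      push_cast
      nlinarith [ih hm']

lemma suffix_S (l : List ℝ) (u : ℕ) (hu : u ≤ l.length) :
    l.sum - Pf l (l.length - u) = ∑ j ∈ Finset.Ico (l.length - u) l.length, l.getD j 0 := by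
  have h1 : Pf l l.length = l.sum := Pf_of_le_length (le_refl _)
  have h2 : Pf l (l.length - u) + ∑ j ∈ Finset.Ico (l.length - u) l.length, l.getD j 0
      = Pf l l.length := by
    unfold Pf
    rw [Finset.range_eq_Ico, Finset.range_eq_Ico]
    exact Finset.sum_Ico_consecutive (fun j => l.getD j 0) (n := l.length - u) (Nat.zero_le _) (by omega)
  linarith

lemma suffix_avg {l : List ℝ} (hs : l.Pairwise (· ≥ ·)) {u v : ℕ}
    (huv : u ≤ v) (hv : v ≤ l.length) :
    (v : ℝ) * (l.sum - Pf l (l.length - u)) ≤ (u : ℝ) * (l.sum - Pf l (l.length - v)) := by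
  induction v, huv using Nat.le_induction with
  | base => exact le_refl _
  | succ v huv ih =>
      have hv' : v ≤ l.length := by omega
      have hvlt : v < l.length := by omega
      have hidx : l.length - (v+1) < l.length := by omega
      have hSstep : l.sum - Pf l (l.length - (v+1))
          = (l.sum - Pf l (l.length - v)) + l.getD (l.length - (v+1)) 0 := by
        have : l.length - v = (l.length - (v+1)) + 1 := by omega
        rw [this, Pf_succ]
        ring_nf
      have hSu : l.sum - Pf l (l.length - u) ≤ (u:ℝ) * l.getD (l.length - (v+1)) 0 := by
        rw [suffix_S l u (by omega)]
        have hb : ∀ j ∈ Finset.Ico (l.length - u) l.length,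
            l.getD j 0 ≤ l.getD (l.length - (v+1)) 0 := by
          intro j hj
          rw [Finset.mem_Ico] at hj
          exact getD_sorted hs (by omega : l.length - (v+1) ≤ j) hj.2
        calc ∑ j ∈ Finset.Ico (l.length - u) l.length, l.getD j 0
            ≤ ∑ _j ∈ Finset.Ico (l.length - u) l.length, l.getD (l.length - (v+1)) 0 :=
              Finset.sum_le_sum hb
          _ = (u:ℝ) * l.getD (l.length - (v+1)) 0 := by
              rw [Finset.sum_const, Nat.card_Ico, nsmul_eq_mul]
              congr 2
              omega
      rw [hSstep]
      push_cast
      nlinarith [ih hv']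

lemma prefix_max {l : List ℝ} (hs : l.Pairwise (· ≥ ·)) :
    ∀ u : Multiset ℝ, u ≤ (l : Multiset ℝ) → Multiset.card u ≤ l.length →
      u.sum ≤ Pf l (Multiset.card u) := by
  induction l with
  | nil =>
      intro u hu _
      rw [Multiset.le_zero.mp hu]
      simp [Pf]
  | cons a l ih =>
      intro u hu hcard
      have hsort' : l.Pairwise (· ≥ ·) := hs.tail
      by_cases hmem : a ∈ u
      · obtain ⟨u', rfl⟩ := Multiset.exists_cons_of_mem hmem
        have hu' : u' ≤ (l : Multiset ℝ) := by
          have : (a ::ₘ u') ≤ a ::ₘ (l : Multiset ℝ) := hu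
          exact (Multiset.cons_le_cons_iff a).mp this
        have hc' : Multiset.card u' ≤ l.length := by
          have := Multiset.card_le_card hu'
          simpa using this
        rw [Multiset.card_cons, Pf_cons_succ, Multiset.sum_cons]
        exact add_le_add_right (ih hsort' u' hu' hc') a
      · have hu' : u ≤ (l : Multiset ℝ) := by
          rw [Multiset.le_iff_count]
          intro b
          by_cases hb : b = a
          · subst hb
            simp [Multiset.count_eq_zero.mpr hmem]
          · have := Multiset.le_iff_count.mp hu b
            rwa [show ((a :: l : List ℝ) : Multiset ℝ) = a ::ₘ (l : Multiset ℝ) from rfl,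
              Multiset.count_cons_of_ne hb] at this
        have hc' : Multiset.card u ≤ l.length := by
          have := Multiset.card_le_card hu'
          simpa using this
        refine le_trans (ih hsort' u hu' hc') ?_
        cases hcu : Multiset.card u with
        | zero => simp [Pf]
        | succ r =>
            rw [Pf_cons_succ, Pf_succ]
            have hr : r < l.length := by omega
            have := getD_mem_le_head hs hr
            linarith


/-! ### counting machinery -/

lemma jumpsum (L : List (ℝ × ℕ)) (x : ℝ) :
    (L.map (fun s => if s.1 - (s.2:ℝ) = x then (1:ℤ) else 0)).sum
      - (L.map (fun t => if t.1 = x - 1 then (1:ℤ) else 0)).sum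
    = ((msum L).count x : ℤ) - ((msum L).count (x-1) : ℤ) := by
  induction L with
  | nil => simp [msum]
  | cons s L ih =>
      rw [msum_cons]
      simp only [List.map_cons, List.sum_cons, Multiset.count_add]
      push_cast
      have hsj := seg_jump s.1 x s.2
      have hiff : (s.1 - (s.2:ℝ) = x) ↔ (x = s.1 - (s.2:ℝ)) := eq_comm
      have hiff2 : (s.1 = x - 1) ↔ (x = s.1 + 1) := by constructor <;> intro h <;> linarith
      rw [if_congr hiff rfl rfl, if_congr hiff2 rfl rfl]
      push_cast at ih hsj
      linarith

section Params

variable {a₁ b₁ a₂ b₂ : ℝ} {d₁ d₂ c : ℕ}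

lemma cms_jump (hd₁ : 1 ≤ d₁) (hd₂ : 1 ≤ d₂) (hc : 1 ≤ c)
    (h₁ : a₁ = a₂ + d₁) (h₂ : a₂ = b₁ + c) (h₃ : b₁ = b₂ + d₂) (x : ℝ) :
    ((segMultiset a₁ (d₁ + c) + segMultiset a₂ (c + d₂)).count x : ℤ)
      - ((segMultiset a₁ (d₁ + c) + segMultiset a₂ (c + d₂)).count (x-1) : ℤ)
    = ((if x = b₁ then 1 else 0) + (if x = b₂ then 1 else 0))
      - ((if x = a₁ + 1 then 1 else 0) + (if x = a₂ + 1 then 1 else 0)) := by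
  have e₁ : a₁ - ((d₁ + c : ℕ):ℝ) = b₁ := by push_cast; linarith
  have e₂ : a₂ - ((c + d₂ : ℕ):ℝ) = b₂ := by push_cast; linarith
  have j₁ := seg_jump a₁ x (d₁ + c)
  have j₂ := seg_jump a₂ x (c + d₂)
  rw [e₁] at j₁
  rw [e₂] at j₂
  simp only [Multiset.count_add]
  push_cast
  push_cast at j₁ j₂
  linarith

lemma findpair (hd₁ : 1 ≤ d₁) (hd₂ : 1 ≤ d₂) (hc : 1 ≤ c)
    (h₁ : a₁ = a₂ + d₁) (h₂ : a₂ = b₁ + c) (h₃ : b₁ = b₂ + d₂)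
    (L : List (ℝ × ℕ))
    (hm : msum L = segMultiset a₁ (d₁ + c) + segMultiset a₂ (c + d₂))
    (h3 : 3 ≤ L.length) :
    ∃ s ∈ L, ∃ t ∈ L, s.1 - (s.2:ℝ) = t.1 + 1 := by
  have hd₁' : (1:ℝ) ≤ d₁ := by exact_mod_cast hd₁
  have hd₂' : (1:ℝ) ≤ d₂ := by exact_mod_cast hd₂
  have hc' : (1:ℝ) ≤ c := by exact_mod_cast hc
  have hne₁ : b₁ ≠ b₂ := by intro h; rw [h] at h₃; linarith
  have hne₂ : b₁ ≠ a₁ + 1 := by intro h; linarith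
  have hne₃ : b₁ ≠ a₂ + 1 := by intro h; linarith
  have hne₄ : b₂ ≠ a₁ + 1 := by intro h; linarith
  have hne₅ : b₂ ≠ a₂ + 1 := by intro h; linarith
  have hne₆ : b₂ ≠ b₁ := fun h => hne₁ h.symm
  by_contra hno
  push_neg at hno
  set B : ℝ → ℤ := fun x => (L.map (fun s => if s.1 - (s.2:ℝ) = x then (1:ℤ) else 0)).sum with hBdef
  have hδ : ∀ x : ℝ, (∃ s ∈ L, s.1 - (s.2:ℝ) = x) →
      B x = ((if x = b₁ then 1 else 0) + (if x = b₂ then 1 else 0))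
        - ((if x = a₁ + 1 then 1 else 0) + (if x = a₂ + 1 then 1 else 0)) := by
    intro x hex
    have hTp : (L.map (fun t => if t.1 = x - 1 then (1:ℤ) else 0)).sum = 0 := by
      apply List.sum_eq_zero
      intro z hz
      rw [List.mem_map] at hz
      obtain ⟨t, ht, rfl⟩ := hz
      rw [if_neg]
      intro h
      obtain ⟨s, hs, hsx⟩ := hex
      exact hno s hs t ht (by linarith)
    have := jumpsum L x
    rw [hm, hTp, cms_jump hd₁ hd₂ hc h₁ h₂ h₃ x] at this
    linarith [this]
  have hB1 : ∀ x : ℝ, (∃ s ∈ L, s.1 - (s.2:ℝ) = x) → 1 ≤ B x := by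
    rintro x ⟨s, hs, hsx⟩
    have hmem : (if s.1 - (s.2:ℝ) = x then (1:ℤ) else 0)
        ∈ L.map (fun s => if s.1 - (s.2:ℝ) = x then (1:ℤ) else 0) :=
      List.mem_map_of_mem hs
    have h1 : (if s.1 - (s.2:ℝ) = x then (1:ℤ) else 0) = 1 := if_pos hsx
    have hnn : ∀ z ∈ L.map (fun s => if s.1 - (s.2:ℝ) = x then (1:ℤ) else 0), 0 ≤ z := by
      intro z hz
      rw [List.mem_map] at hz
      obtain ⟨t, ht, rfl⟩ := hz
      split_ifs <;> norm_num
    have := List.single_le_sum hnn _ hmem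
    rw [h1] at this
    exact this
  have hbots : ∀ s ∈ L, s.1 - (s.2:ℝ) = b₁ ∨ s.1 - (s.2:ℝ) = b₂ := by
    intro s hs
    by_contra hcon
    push_neg at hcon
    have hx := hδ _ ⟨s, hs, rfl⟩
    have h1 := hB1 _ ⟨s, hs, rfl⟩
    rw [if_neg hcon.1, if_neg hcon.2] at hx
    split_ifs at hx <;> omega
  have hBle : ∀ y : ℝ, (y = b₁ ∨ y = b₂) → B y ≤ 1 := by
    intro y hy
    by_cases hex : ∃ s ∈ L, s.1 - (s.2:ℝ) = y
    · have hx := hδ y hex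
      rcases hy with rfl | rfl
      · rw [if_pos rfl, if_neg hne₁, if_neg hne₂, if_neg hne₃] at hx
        omega
      · rw [if_neg hne₆, if_pos rfl, if_neg hne₄, if_neg hne₅] at hx
        omega
    · push_neg at hex
      have : B y = 0 := by
        apply List.sum_eq_zero
        intro z hz
        rw [List.mem_map] at hz
        obtain ⟨t, ht, rfl⟩ := hz
        exact if_neg (hex t ht)
      omega
  have hlen : (L.length : ℤ) ≤ B b₁ + B b₂ := by
    have hpt : ∀ s ∈ L, (1:ℤ) ≤ (if s.1 - (s.2:ℝ) = b₁ then (1:ℤ) else 0)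
        + (if s.1 - (s.2:ℝ) = b₂ then (1:ℤ) else 0) := by
      intro s hs
      rcases hbots s hs with h | h
      · rw [if_pos h]; split_ifs <;> omega
      · rw [if_pos h]; split_ifs <;> omega
    calc (L.length : ℤ) = (L.map (fun _ => (1:ℤ))).sum := by
          simp only [List.map_const', List.sum_replicate, nsmul_eq_mul, mul_one]
      _ ≤ (L.map (fun s => (if s.1 - (s.2:ℝ) = b₁ then (1:ℤ) else 0)
            + (if s.1 - (s.2:ℝ) = b₂ then (1:ℤ) else 0))).sum := List.sum_le_sum hpt
      _ = B b₁ + B b₂ := List.sum_map_add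
  have := hBle b₁ (Or.inl rfl)
  have := hBle b₂ (Or.inr rfl)
  omega

lemma count_seg_le_one (α x : ℝ) (k : ℕ) : (segMultiset α k).count x ≤ 1 := by
  rw [count_seg]; split_ifs <;> omega

lemma mem_seg_bounds {x α : ℝ} {k : ℕ} (h : x ∈ segMultiset α k) :
    α - k ≤ x ∧ x ≤ α := by
  obtain ⟨j, hj, rfl⟩ := mem_seg.mp h
  have hj' : (j:ℝ) ≤ k := by exact_mod_cast hj
  have hj0 : (0:ℝ) ≤ j := by positivity
  exact ⟨by linarith, by linarith⟩

lemma mem_cms_grid (h₁ : a₁ = a₂ + d₁)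
    {x : ℝ} (h : x ∈ segMultiset a₁ (d₁ + c) + segMultiset a₂ (c + d₂)) :
    ∃ n : ℕ, x = a₁ - n := by
  rcases Multiset.mem_add.mp h with h | h
  · obtain ⟨j, _, rfl⟩ := mem_seg.mp h
    exact ⟨j, rfl⟩
  · obtain ⟨j, _, rfl⟩ := mem_seg.mp h
    exact ⟨d₁ + j, by push_cast; linarith⟩

lemma mem_cms_lb (h₁ : a₁ = a₂ + d₁) (h₂ : a₂ = b₁ + c) (h₃ : b₁ = b₂ + d₂)
    {x : ℝ} (h : x ∈ segMultiset a₁ (d₁ + c) + segMultiset a₂ (c + d₂)) :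
    b₂ ≤ x := by
  have hd₂' : (0:ℝ) ≤ d₂ := by positivity
  rcases Multiset.mem_add.mp h with h | h <;> have hb := (mem_seg_bounds h).1 <;> push_cast at hb
  · linarith
  · linarith

lemma mem_cms_ub (h₁ : a₁ = a₂ + d₁)
    {x : ℝ} (h : x ∈ segMultiset a₁ (d₁ + c) + segMultiset a₂ (c + d₂)) :
    x ≤ a₁ := by
  have hd₁' : (0:ℝ) ≤ d₁ := by positivity
  rcases Multiset.mem_add.mp h with h | h <;> have hb := (mem_seg_bounds h).2
  · linarith
  · linarith

lemma count_cms_b₁ (hd₁ : 1 ≤ d₁) (hd₂ : 1 ≤ d₂) (hc : 1 ≤ c)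
    (h₁ : a₁ = a₂ + d₁) (h₂ : a₂ = b₁ + c) (h₃ : b₁ = b₂ + d₂) :
    (segMultiset a₁ (d₁ + c) + segMultiset a₂ (c + d₂)).count b₁ = 2 := by
  rw [Multiset.count_add, count_seg, count_seg,
    if_pos ⟨d₁ + c, le_refl _, by push_cast; linarith⟩,
    if_pos ⟨c, by omega, by push_cast; linarith⟩]

lemma class2aux (hd₁ : 1 ≤ d₁) (hd₂ : 1 ≤ d₂) (hc : 1 ≤ c)
    (h₁ : a₁ = a₂ + d₁) (h₂ : a₂ = b₁ + c) (h₃ : b₁ = b₂ + d₂)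
    (s t : ℝ × ℕ)
    (hm : segMultiset s.1 s.2 + segMultiset t.1 t.2
      = segMultiset a₁ (d₁ + c) + segMultiset a₂ (c + d₂))
    (ha : a₁ ∈ segMultiset s.1 s.2) :
    (Multiset.replicate (s.2+1) (segMid s.1 s.2) + Multiset.replicate (t.2+1) (segMid t.1 t.2)
      = Multiset.replicate (d₁+c+d₂+1) ((a₁+b₂)/2) + Multiset.replicate (c+1) ((a₂+b₁)/2))
    ∨ (Multiset.replicate (s.2+1) (segMid s.1 s.2) + Multiset.replicate (t.2+1) (segMid t.1 t.2)
      = Multiset.replicate (d₁+c+1) ((a₁+b₁)/2) + Multiset.replicate (c+d₂+1) ((a₂+b₂)/2)) := by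
  have hd₁' : (1:ℝ) ≤ d₁ := by exact_mod_cast hd₁
  have hd₂' : (1:ℝ) ≤ d₂ := by exact_mod_cast hd₂
  have hc' : (1:ℝ) ≤ c := by exact_mod_cast hc
  subst h₁
  subst h₂
  subst h₃
  set b₁ : ℝ := b₂ + d₂ with hb₁def
  set a₂ : ℝ := b₁ + c with ha₂def
  set a₁ : ℝ := a₂ + d₁ with ha₁def
  have h₁ : a₁ = a₂ + d₁ := rfl
  have h₂ : a₂ = b₁ + c := rfl
  have h₃ : b₁ = b₂ + d₂ := rfl
  -- s.1 = a₁
  have hs1mem : s.1 ∈ segMultiset s.1 s.2 := mem_seg.mpr ⟨0, Nat.zero_le _, by simp⟩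
  have hs1cms : s.1 ∈ segMultiset a₁ (d₁ + c) + segMultiset a₂ (c + d₂) := by
    rw [← hm]; exact Multiset.mem_add.mpr (Or.inl hs1mem)
  have hs1 : s.1 = a₁ :=
    le_antisymm (mem_cms_ub h₁ hs1cms) (mem_seg_bounds ha).2
  -- b₁ in both segments
  have hcountb₁ : (segMultiset s.1 s.2).count b₁ + (segMultiset t.1 t.2).count b₁ = 2 := by
    have := count_cms_b₁ hd₁ hd₂ hc h₁ h₂ h₃
    rw [← hm, Multiset.count_add] at this
    exact this
  have hb₁s : b₁ ∈ segMultiset s.1 s.2 := by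
    have h1 := count_seg_le_one s.1 b₁ s.2
    have h2 := count_seg_le_one t.1 b₁ t.2
    refine Multiset.count_pos.mp ?_
    omega
  have hb₁t : b₁ ∈ segMultiset t.1 t.2 := by
    have h1 := count_seg_le_one s.1 b₁ s.2
    have h2 := count_seg_le_one t.1 b₁ t.2
    refine Multiset.count_pos.mp ?_
    omega
  -- cardinality relation
  have hcard : s.2 + 1 + (t.2 + 1) = (d₁ + c + 1) + (c + d₂ + 1) := by
    have := congrArg Multiset.card hm
    rwa [Multiset.card_add, Multiset.card_add, seg_card, seg_card, seg_card, seg_card] at this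
  -- sum relation
  have hsum : (s.2 + 1 : ℝ) * segMid s.1 s.2 + (t.2 + 1 : ℝ) * segMid t.1 t.2
      = (d₁ + c + 1 : ℝ) * ((a₁ + b₁)/2) + (c + d₂ + 1 : ℝ) * ((a₂ + b₂)/2) := by
    have := congrArg Multiset.sum hm
    rw [Multiset.sum_add, Multiset.sum_add, seg_sum, seg_sum, seg_sum, seg_sum] at this
    have e1 : segMid a₁ (d₁ + c) = (a₁ + b₁)/2 := by
      unfold segMid; push_cast; rw [show a₁ - ((d₁:ℝ) + c) = b₁ by linarith]
    have e2 : segMid a₂ (c + d₂) = (a₂ + b₂)/2 := by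
      unfold segMid; push_cast; rw [show a₂ - ((c:ℝ) + d₂) = b₂ by linarith]
    rw [e1, e2] at this
    push_cast at this ⊢
    linarith
  -- b₂ in s or t
  have hb₂cms : b₂ ∈ segMultiset a₁ (d₁ + c) + segMultiset a₂ (c + d₂) :=
    Multiset.mem_add.mpr (Or.inr (mem_seg.mpr ⟨c + d₂, le_refl _, by push_cast; linarith⟩))
  rw [← hm] at hb₂cms
  rcases Multiset.mem_add.mp hb₂cms with hb₂s | hb₂t
  · -- case 1 : bot s = b₂, the union/intersection pair
    left
    have hbot : s.1 - (s.2:ℝ) = b₂ := by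
      refine le_antisymm ?_ ?_
      · have := (mem_seg_bounds hb₂s).1; linarith
      · refine mem_cms_lb h₁ h₂ h₃ ?_
        rw [← hm]
        exact Multiset.mem_add.mpr (Or.inl (mem_seg.mpr ⟨s.2, le_refl _, rfl⟩))
    have hs2 : s.2 = d₁ + c + d₂ := by
      have : (s.2 : ℝ) = ((d₁ + c + d₂ : ℕ) : ℝ) := by push_cast; linarith [hs1]
      exact_mod_cast this
    have ht2 : t.2 = c := by omega
    have hmids : segMid s.1 s.2 = (a₁ + b₂)/2 := by
      unfold segMid
      rw [hbot, hs1]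
    have hs2' : (s.2:ℝ) = (d₁:ℝ) + c + d₂ := by rw [hs2]; push_cast; ring
    have ht2' : (t.2:ℝ) = c := by rw [ht2]
    have hmidt : segMid t.1 t.2 = (a₂ + b₁)/2 := by
      have hc0 : ((c:ℝ) + 1) ≠ 0 := by positivity
      have hlin : ((c:ℝ) + 1) * segMid t.1 t.2 = ((c:ℝ) + 1) * ((a₂ + b₁)/2) := by
        rw [hmids, hs2', ht2'] at hsum
        linear_combination hsum
      exact mul_left_cancel₀ hc0 hlin
    rw [hmids, hmidt, hs2, ht2]
  · -- case 2 : bot t = b₂, the original pair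
    right
    have hbott : t.1 - (t.2:ℝ) = b₂ := by
      refine le_antisymm ?_ ?_
      · have := (mem_seg_bounds hb₂t).1; linarith
      · refine mem_cms_lb h₁ h₂ h₃ ?_
        rw [← hm]
        exact Multiset.mem_add.mpr (Or.inr (mem_seg.mpr ⟨t.2, le_refl _, rfl⟩))
    -- bot s ∈ seg t
    have hbotscms : s.1 - (s.2:ℝ) ∈ segMultiset a₁ (d₁ + c) + segMultiset a₂ (c + d₂) := by
      rw [← hm]
      exact Multiset.mem_add.mpr (Or.inl (mem_seg.mpr ⟨s.2, le_refl _, rfl⟩))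
    have ht1cms : t.1 ∈ segMultiset a₁ (d₁ + c) + segMultiset a₂ (c + d₂) := by
      rw [← hm]
      exact Multiset.mem_add.mpr (Or.inr (mem_seg.mpr ⟨0, Nat.zero_le _, by simp⟩))
    obtain ⟨n, hn⟩ := mem_cms_grid h₁ hbotscms
    obtain ⟨m, hmm⟩ := mem_cms_grid h₁ ht1cms
    have hbotsleb₁ : s.1 - (s.2:ℝ) ≤ b₁ := by
      have := (mem_seg_bounds hb₁s).1; linarith
    have hb₁let1 : b₁ ≤ t.1 := (mem_seg_bounds hb₁t).2
    have hmn : m ≤ n := by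
      have : (m:ℝ) ≤ (n:ℝ) := by nlinarith [hn, hmm, hbotsleb₁, hb₁let1]
      exact_mod_cast this
    have hbotsmem_t : s.1 - (s.2:ℝ) ∈ segMultiset t.1 t.2 := by
      refine mem_seg.mpr ⟨n - m, ?_, ?_⟩
      · -- n - m ≤ t.2
        have hb₂lebots : b₂ ≤ s.1 - (s.2:ℝ) := mem_cms_lb h₁ h₂ h₃ hbotscms
        have hcast : ((n - m : ℕ) : ℝ) = (n:ℝ) - m := by
          push_cast [Nat.cast_sub hmn]; ring
        have : t.1 - (t.2:ℝ) ≤ t.1 - ((n - m : ℕ):ℝ) := by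
          rw [hcast, hmm]
          push_cast
          linarith [hn, hbott, hb₂lebots, hmm]
        have h2 := this
        have : ((n - m : ℕ):ℝ) ≤ (t.2:ℝ) := by linarith
        exact_mod_cast this
      · rw [hmm, hn]
        push_cast [Nat.cast_sub hmn]
        ring
    have hcount2 : s.1 - (s.2:ℝ) ∈ segMultiset a₁ (d₁ + c) := by
      have hc1 : (segMultiset a₁ (d₁+c)).count (s.1 - (s.2:ℝ))
          + (segMultiset a₂ (c+d₂)).count (s.1 - (s.2:ℝ))
          = (segMultiset s.1 s.2).count (s.1 - (s.2:ℝ))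
          + (segMultiset t.1 t.2).count (s.1 - (s.2:ℝ)) := by
        have := congrArg (Multiset.count (s.1 - (s.2:ℝ))) hm
        rw [Multiset.count_add, Multiset.count_add] at this
        omega
      have hms : (segMultiset s.1 s.2).count (s.1 - (s.2:ℝ)) = 1 :=
        Multiset.count_eq_one_of_mem (seg_nodup _ _) (mem_seg.mpr ⟨s.2, le_refl _, rfl⟩)
      have hmt : (segMultiset t.1 t.2).count (s.1 - (s.2:ℝ)) = 1 :=
        Multiset.count_eq_one_of_mem (seg_nodup _ _) hbotsmem_t
      have hle1 := count_seg_le_one a₁ (s.1 - (s.2:ℝ)) (d₁+c)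
      have hle2 := count_seg_le_one a₂ (s.1 - (s.2:ℝ)) (c+d₂)
      refine Multiset.count_pos.mp ?_
      omega
    have hbots : s.1 - (s.2:ℝ) = b₁ := by
      refine le_antisymm hbotsleb₁ ?_
      have := (mem_seg_bounds hcount2).1
      push_cast at this
      linarith
    have hs2 : s.2 = d₁ + c := by
      have : (s.2 : ℝ) = ((d₁ + c : ℕ) : ℝ) := by push_cast; linarith [hs1, hbots]
      exact_mod_cast this
    have ht2 : t.2 = c + d₂ := by omega
    have hmids : segMid s.1 s.2 = (a₁ + b₁)/2 := by
      unfold segMid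
      rw [hbots, hs1]
    have hs2' : (s.2:ℝ) = (d₁:ℝ) + c := by rw [hs2]; push_cast; ring
    have ht2' : (t.2:ℝ) = (c:ℝ) + d₂ := by rw [ht2]; push_cast; ring
    have hmidt : segMid t.1 t.2 = (a₂ + b₂)/2 := by
      have hc0 : ((c:ℝ) + (d₂:ℝ) + 1) ≠ 0 := by positivity
      have hlin : ((c:ℝ) + d₂ + 1) * segMid t.1 t.2 = ((c:ℝ) + d₂ + 1) * ((a₂ + b₂)/2) := by
        rw [hmids, hs2', ht2'] at hsum
        linear_combination hsum
      exact mul_left_cancel₀ hc0 hlin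
    rw [hmids, hmidt, hs2, ht2]

lemma class2 (hd₁ : 1 ≤ d₁) (hd₂ : 1 ≤ d₂) (hc : 1 ≤ c)
    (h₁ : a₁ = a₂ + d₁) (h₂ : a₂ = b₁ + c) (h₃ : b₁ = b₂ + d₂)
    (s t : ℝ × ℕ)
    (hm : msum [s, t] = segMultiset a₁ (d₁ + c) + segMultiset a₂ (c + d₂)) :
    (blocksM [s, t]
      = Multiset.replicate (d₁+c+d₂+1) ((a₁+b₂)/2) + Multiset.replicate (c+1) ((a₂+b₁)/2))
    ∨ (blocksM [s, t]
      = Multiset.replicate (d₁+c+1) ((a₁+b₁)/2) + Multiset.replicate (c+d₂+1) ((a₂+b₂)/2)) := by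
  have hm' : segMultiset s.1 s.2 + segMultiset t.1 t.2
      = segMultiset a₁ (d₁ + c) + segMultiset a₂ (c + d₂) := by
    have : msum [s, t] = segMultiset s.1 s.2 + segMultiset t.1 t.2 := by
      simp [msum]
    rwa [this] at hm
  have hbl : blocksM [s, t]
      = Multiset.replicate (s.2+1) (segMid s.1 s.2) + Multiset.replicate (t.2+1) (segMid t.1 t.2) := by
    simp [blocksM]
  have ha₁ : a₁ ∈ segMultiset a₁ (d₁ + c) + segMultiset a₂ (c + d₂) :=
    Multiset.mem_add.mpr (Or.inl (mem_seg.mpr ⟨0, Nat.zero_le _, by simp⟩))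
  rw [← hm'] at ha₁
  rcases Multiset.mem_add.mp ha₁ with has | hat
  · rw [hbl]
    exact class2aux hd₁ hd₂ hc h₁ h₂ h₃ s t hm' has
  · rw [hbl]
    have hm'' : segMultiset t.1 t.2 + segMultiset s.1 s.2
        = segMultiset a₁ (d₁ + c) + segMultiset a₂ (c + d₂) := by
      rw [add_comm]; exact hm'
    rcases class2aux hd₁ hd₂ hc h₁ h₂ h₃ t s hm'' hat with h | h
    · left; rw [add_comm]; exact h
    · right; rw [add_comm]; exact h

lemma perm_pair {α : Type*} [DecidableEq α] {s t : α} {L : List α}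
    (hs : s ∈ L) (ht : t ∈ L) (hne : s ≠ t) : ∃ L₂, L.Perm (s :: t :: L₂) := by
  have p1 := List.perm_cons_erase hs
  have ht' : t ∈ L.erase s := (List.mem_erase_of_ne hne.symm).mpr ht
  have p2 := List.perm_cons_erase ht'
  exact ⟨(L.erase s).erase t, p1.trans (List.Perm.cons s p2)⟩

lemma merge_step (s t : ℝ × ℕ) (L'' : List (ℝ × ℕ)) (hmerge : t.1 = s.1 - s.2 - 1)
    (u : Multiset ℝ) (hu : u ≤ blocksM ((s.1, s.2 + t.2 + 1) :: L'')) :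
    ∃ u', u' ≤ blocksM (s :: t :: L'') ∧ Multiset.card u' = Multiset.card u
      ∧ u.sum ≤ u'.sum := by
  classical
  set v₁ := segMid s.1 s.2 with hv₁
  set v₂ := segMid t.1 t.2 with hv₂
  set vM := segMid s.1 (s.2 + t.2 + 1) with hvM
  set R : Multiset ℝ := Multiset.replicate (s.2 + t.2 + 2) vM with hR
  have hblm : blocksM ((s.1, s.2 + t.2 + 1) :: L'') = R + blocksM L'' := by
    rw [blocksM_cons]
  rw [hblm] at hu
  set u₂ : Multiset ℝ := u - R with hu₂
  set u₁ : Multiset ℝ := u ∩ R with hu₁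
  have hsplit : u₂ + u₁ = u := Multiset.sub_add_inter u R
  have hu₂le : u₂ ≤ blocksM L'' := by
    rw [hu₂, Multiset.sub_le_iff_le_add]
    rwa [add_comm R _] at hu
  have hu₁le : u₁ ≤ R := Multiset.inter_le_right
  set w := Multiset.card u₁ with hw
  have hu₁rep : u₁ = Multiset.replicate w vM := by
    rw [Multiset.eq_replicate]
    refine ⟨rfl, ?_⟩
    intro b hb
    exact Multiset.eq_of_mem_replicate (Multiset.mem_of_le hu₁le hb)
  have hwle : w ≤ s.2 + t.2 + 2 := by
    have := Multiset.card_le_card hu₁le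
    rwa [hR, Multiset.card_replicate] at this
  set w₁ := min w (s.2 + 1) with hw₁
  set w₂ := w - w₁ with hw₂
  have hw₁le : w₁ ≤ s.2 + 1 := min_le_right _ _
  have hw₂le : w₂ ≤ t.2 + 1 := by omega
  have hw12 : w₁ + w₂ = w := by omega
  refine ⟨u₂ + Multiset.replicate w₁ v₁ + Multiset.replicate w₂ v₂, ?_, ?_, ?_⟩
  · have h1 : Multiset.replicate w₁ v₁ ≤ Multiset.replicate (s.2+1) v₁ :=
      (Multiset.replicate_le_replicate v₁).mpr hw₁le
    have h2 : Multiset.replicate w₂ v₂ ≤ Multiset.replicate (t.2+1) v₂ :=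
      (Multiset.replicate_le_replicate v₂).mpr hw₂le
    have hsum2 : u₂ + Multiset.replicate w₁ v₁ + Multiset.replicate w₂ v₂
        ≤ blocksM L'' + Multiset.replicate (s.2+1) v₁ + Multiset.replicate (t.2+1) v₂ :=
      add_le_add (add_le_add hu₂le h1) h2
    refine le_trans hsum2 (le_of_eq ?_)
    rw [blocksM_cons, blocksM_cons]
    show blocksM L'' + Multiset.replicate (s.2+1) v₁ + Multiset.replicate (t.2+1) v₂
      = Multiset.replicate (s.2+1) v₁ + (Multiset.replicate (t.2+1) v₂ + blocksM L'')
    rw [add_comm (blocksM L'') _, add_assoc, add_comm (blocksM L'') _]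
  · rw [← hsplit, Multiset.card_add, Multiset.card_add, Multiset.card_add,
      Multiset.card_replicate, Multiset.card_replicate, hu₁rep, Multiset.card_replicate]
    omega
  · rw [← hsplit, Multiset.sum_add, Multiset.sum_add, Multiset.sum_add, hu₁rep,
      Multiset.sum_replicate, Multiset.sum_replicate, Multiset.sum_replicate]
    rw [nsmul_eq_mul, nsmul_eq_mul, nsmul_eq_mul]
    have hid : ((s.2:ℝ)+1) * v₁ + ((t.2:ℝ)+1) * v₂ = ((s.2:ℝ) + t.2 + 2) * vM := by
      rw [hv₁, hv₂, hvM]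
      unfold segMid
      rw [hmerge]
      push_cast
      ring
    have hv12 : v₂ ≤ v₁ := by
      rw [hv₁, hv₂]
      unfold segMid
      rw [hmerge]
      have c1 : (0:ℝ) ≤ s.2 := by positivity
      have c2 : (0:ℝ) ≤ t.2 := by positivity
      push_cast
      linarith
    have hvMle : vM ≤ v₁ := by
      have hpos : (0:ℝ) < (s.2:ℝ) + t.2 + 2 := by positivity
      nlinarith [hid, hv12]
    by_cases hcase : w ≤ s.2 + 1
    · have hw₁' : w₁ = w := by omega
      have hw₂' : w₂ = 0 := by omega
      rw [hw₁', hw₂']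
      have hwnn : (0:ℝ) ≤ (w:ℝ) := by positivity
      simp only [Nat.cast_zero, zero_mul, add_zero]
      nlinarith [hvMle, hwnn]
    · have hw₁' : w₁ = s.2 + 1 := by omega
      have hw₂' : (w₂:ℝ) = (w:ℝ) - ((s.2:ℝ)+1) := by
        rw [hw₂, hw₁']
        push_cast [Nat.cast_sub (by omega : s.2 + 1 ≤ w)]
        ring
      rw [hw₁', hw₂']
      have hwub : (w:ℝ) ≤ (s.2:ℝ) + t.2 + 2 := by exact_mod_cast hwle
      have hwlb : ((s.2:ℝ)+1) ≤ (w:ℝ) := by exact_mod_cast (by omega : s.2+1 ≤ w)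
      have hkey : ((s.2:ℝ) + t.2 + 2) * (((s.2:ℝ)+1) * v₁ + ((w:ℝ) - ((s.2:ℝ)+1)) * v₂ - (w:ℝ) * vM)
          = ((s.2:ℝ)+1) * (((s.2:ℝ) + t.2 + 2) - w) * (v₁ - v₂) := by
        linear_combination (w:ℝ) * hid
      have hrnn : (0:ℝ) ≤ ((s.2:ℝ)+1) * (((s.2:ℝ) + t.2 + 2) - w) * (v₁ - v₂) := by
        apply mul_nonneg
        apply mul_nonneg
        · positivity
        · linarith
        · linarith
      have hpos : (0:ℝ) < (s.2:ℝ) + t.2 + 2 := by positivity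
      push_cast
      nlinarith [hkey, hrnn, hpos]

lemma key (hd₁ : 1 ≤ d₁) (hd₂ : 1 ≤ d₂) (hc : 1 ≤ c)
    (h₁ : a₁ = a₂ + d₁) (h₂ : a₂ = b₁ + c) (h₃ : b₁ = b₂ + d₂)
    (m : ℕ) (T : ℝ)
    (hbase : ∀ s t : ℝ × ℕ,
      msum [s, t] = segMultiset a₁ (d₁ + c) + segMultiset a₂ (c + d₂) →
      ∃ u, u ≤ blocksM [s, t] ∧ Multiset.card u = m ∧ T ≤ u.sum) :
    ∀ n (L : List (ℝ × ℕ)), L.length ≤ n →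
      msum L = segMultiset a₁ (d₁ + c) + segMultiset a₂ (c + d₂) →
      ∃ u, u ≤ blocksM L ∧ Multiset.card u = m ∧ T ≤ u.sum := by
  classical
  intro n
  induction n with
  | zero =>
      intro L hlen hm
      exfalso
      have hnil : L = [] := List.length_eq_zero_iff.mp (Nat.le_zero.mp hlen)
      subst hnil
      have : a₁ ∈ msum ([] : List (ℝ × ℕ)) := by
        rw [hm]
        exact Multiset.mem_add.mpr (Or.inl (mem_seg.mpr ⟨0, Nat.zero_le _, by simp⟩))
      simp [msum] at this
  | succ n ih =>
      intro L hlen hm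
      match L, hlen with
      | [], _ =>
          exfalso
          have : a₁ ∈ msum ([] : List (ℝ × ℕ)) := by
            rw [hm]
            exact Multiset.mem_add.mpr (Or.inl (mem_seg.mpr ⟨0, Nat.zero_le _, by simp⟩))
          simp [msum] at this
      | [s], _ =>
          exfalso
          have hcnt : (msum [s]).count b₁ = 2 := by
            rw [hm]
            exact count_cms_b₁ hd₁ hd₂ hc h₁ h₂ h₃
          have : msum [s] = segMultiset s.1 s.2 := by simp [msum]
          rw [this] at hcnt
          have := count_seg_le_one s.1 b₁ s.2
          omega
      | [s, t], _ => exact hbase s t hm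
      | s₀ :: t₀ :: r₀ :: L₀, hlen =>
          set L' : List (ℝ × ℕ) := s₀ :: t₀ :: r₀ :: L₀ with hL'
          have h3 : 3 ≤ L'.length := by simp [hL']
          obtain ⟨s, hs, t, ht, hpair⟩ := findpair hd₁ hd₂ hc h₁ h₂ h₃ L' hm h3
          have hne : s ≠ t := by
            intro h
            rw [← h] at hpair
            have : (s.2:ℝ) = -1 := by linarith
            have h0 : (0:ℝ) ≤ (s.2:ℝ) := by positivity
            linarith
          have ht1 : t.1 = s.1 - (s.2:ℝ) - 1 := by linarith
          obtain ⟨L₂, hperm⟩ := perm_pair hs ht hne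
          have hmsum_merge : msum ((s.1, s.2 + t.2 + 1) :: L₂)
              = segMultiset a₁ (d₁ + c) + segMultiset a₂ (c + d₂) := by
            rw [← hm, msum_perm hperm, msum_cons, msum_cons, msum_cons]
            show segMultiset s.1 (s.2 + t.2 + 1) + msum L₂
              = segMultiset s.1 s.2 + (segMultiset t.1 t.2 + msum L₂)
            rw [seg_merge s.1 s.2 t.2, ← ht1, ← add_assoc]
          have hlen2 : ((s.1, s.2 + t.2 + 1) :: L₂).length ≤ n := by
            have hplen := hperm.length_eq
            rw [hL'] at hplen
            simp only [List.length_cons] at hplen ⊢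
            simp only [hL', List.length_cons] at hlen
            omega
          obtain ⟨u, hule, hucard, husum⟩ := ih ((s.1, s.2 + t.2 + 1) :: L₂) hlen2 hmsum_merge
          obtain ⟨u', hu'le, hu'card, hu'sum⟩ := merge_step s t L₂ ht1 u hule
          refine ⟨u', ?_, by omega, le_trans husum hu'sum⟩
          rwa [blocksM_perm hperm]
lemma keyI (hd₁ : 1 ≤ d₁) (hd₂ : 1 ≤ d₂) (hc : 1 ≤ c)
    (h₁ : a₁ = a₂ + d₁) (h₂ : a₂ = b₁ + c) (h₃ : b₁ = b₂ + d₂)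
    (L : List (ℝ × ℕ))
    (hm : msum L = segMultiset a₁ (d₁ + c) + segMultiset a₂ (c + d₂)) :
    ∃ u, u ≤ blocksM L ∧ Multiset.card u = d₁ + c + d₂ + 1
      ∧ ((d₁ + c + d₂ + 1 : ℕ) : ℝ) * ((a₁ + b₂)/2) ≤ u.sum := by
  refine key hd₁ hd₂ hc h₁ h₂ h₃ _ _ ?_ L.length L (le_refl _) hm
  intro s t hm2
  rcases class2 hd₁ hd₂ hc h₁ h₂ h₃ s t hm2 with hbl | hbl
  · refine ⟨Multiset.replicate (d₁+c+d₂+1) ((a₁+b₂)/2), ?_, ?_, ?_⟩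
    · rw [hbl]; exact le_add_right (le_refl _)
    · rw [Multiset.card_replicate]
    · rw [Multiset.sum_replicate, nsmul_eq_mul]
  · refine ⟨Multiset.replicate (d₁+c+1) ((a₁+b₁)/2) + Multiset.replicate d₂ ((a₂+b₂)/2),
      ?_, ?_, ?_⟩
    · rw [hbl]
      exact add_le_add (le_refl _) ((Multiset.replicate_le_replicate _).mpr (by omega))
    · rw [Multiset.card_add, Multiset.card_replicate, Multiset.card_replicate]; omega
    · rw [Multiset.sum_add, Multiset.sum_replicate, Multiset.sum_replicate,
        nsmul_eq_mul, nsmul_eq_mul]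
      have hd₂' : (0:ℝ) ≤ d₂ := by positivity
      have hc' : (1:ℝ) ≤ c := by exact_mod_cast hc
      have hdiff : ((d₁+c+1 : ℕ):ℝ) * ((a₁+b₁)/2) + (d₂:ℝ) * ((a₂+b₂)/2)
          - ((d₁+c+d₂+1 : ℕ):ℝ) * ((a₁+b₂)/2) = (d₂:ℝ) * ((c:ℝ)+1) / 2 := by
        subst h₁; subst h₂; subst h₃
        push_cast
        ring
      nlinarith [mul_nonneg hd₂' (by linarith : (0:ℝ) ≤ (c:ℝ)+1), hdiff]

lemma keyII (hd₁ : 1 ≤ d₁) (hd₂ : 1 ≤ d₂) (hc : 1 ≤ c)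
    (h₁ : a₁ = a₂ + d₁) (h₂ : a₂ = b₁ + c) (h₃ : b₁ = b₂ + d₂)
    (L : List (ℝ × ℕ))
    (hm : msum L = segMultiset a₁ (d₁ + c) + segMultiset a₂ (c + d₂)) :
    ∃ u, u ≤ blocksM L ∧ Multiset.card u = c + 1
      ∧ ((c + 1 : ℕ) : ℝ) * ((a₂ + b₁)/2) ≤ u.sum := by
  refine key hd₁ hd₂ hc h₁ h₂ h₃ _ _ ?_ L.length L (le_refl _) hm
  intro s t hm2
  rcases class2 hd₁ hd₂ hc h₁ h₂ h₃ s t hm2 with hbl | hbl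
  · refine ⟨Multiset.replicate (c+1) ((a₂+b₁)/2), ?_, ?_, ?_⟩
    · rw [hbl, add_comm (Multiset.replicate (d₁+c+d₂+1) ((a₁+b₂)/2)) _]
      exact le_add_right (le_refl _)
    · rw [Multiset.card_replicate]
    · rw [Multiset.sum_replicate, nsmul_eq_mul]
  · refine ⟨Multiset.replicate (c+1) ((a₁+b₁)/2), ?_, ?_, ?_⟩
    · rw [hbl]
      exact le_trans ((Multiset.replicate_le_replicate _).mpr (by omega))
        (le_add_right (le_refl _))
    · rw [Multiset.card_replicate]
    · rw [Multiset.sum_replicate, nsmul_eq_mul]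
      have hd₁' : (1:ℝ) ≤ d₁ := by exact_mod_cast hd₁
      have hc0 : (0:ℝ) ≤ ((c:ℝ)+1) := by positivity
      have ha : a₂ ≤ a₁ := by linarith
      have : ((c+1:ℕ):ℝ) = (c:ℝ)+1 := by push_cast; ring
      rw [this]
      nlinarith [mul_nonneg hc0 (by linarith : (0:ℝ) ≤ a₁ - a₂)]

end Params

lemma sum_range_ite (N M : ℕ) (X Y : ℝ) :
    ∑ j ∈ Finset.range N, (if j < M then X else Y)
      = ((min M N : ℕ) : ℝ) * X + ((N - M : ℕ) : ℝ) * Y := by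
  induction N with
  | zero => simp
  | succ N ihN =>
      rw [Finset.sum_range_succ, ihN]
      by_cases h : N < M
      · rw [if_pos h]
        rw [show min M (N+1) = N + 1 by omega, show min M N = N by omega,
          show N + 1 - M = 0 by omega, show N - M = 0 by omega]
        push_cast
        ring
      · rw [if_neg h]
        rw [show min M (N+1) = M by omega, show min M N = M by omega,
          show N + 1 - M = (N - M) + 1 by omega]
        push_cast
        ring

lemma sum_Iic_fin {N : ℕ} (k : Fin N) (f : ℕ → ℝ) :
    ∑ i ∈ Finset.Iic k, f (i : ℕ) = ∑ j ∈ Finset.range ((k : ℕ) + 1), f j := by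
  have hfil : Finset.Iic k = Finset.univ.filter (fun i : Fin N => (i:ℕ) < (k:ℕ)+1) := by
    ext i
    simp only [Finset.mem_Iic, Finset.mem_filter, Finset.mem_univ, true_and]
    rw [Fin.le_def]
    omega
  rw [hfil, Finset.sum_filter,
    Fin.sum_univ_eq_sum_range (fun j => if j < (k:ℕ)+1 then f j else 0) N,
    ← Finset.sum_filter]
  congr 1
  ext j
  simp only [Finset.mem_filter, Finset.mem_range]
  have := k.isLt
  omega

end St5


open St5 in
set_option maxHeartbeats 1000000 in
/-- Minimality of the Langlands parameter obtained from the union and the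
intersection of two linked segments.  The reals satisfy `a₁ = a₂ + d₁`, `a₂ = b₁ + c`,
`b₁ = b₂ + d₂` with `d₁, d₂, c ≥ 1` naturals, encoding `a₁ > a₂ > b₁ > b₂` with pairwise
integer differences; `N = (d₁+c+1) + (c+d₂+1)`.  `L` is any nonempty list of linear
segments (each recorded as a pair `(α, k)` encoding `(α, …, α-k)`) whose disjoint union of
underlying multisets is that of the two segments `(a₁, …, b₁)`, `(a₂, …, b₂)`, and whose
midpoints are weakly decreasing; `lamS` is the concatenation of its constant blocks.
`lam'` is the parameter of the pair union/intersection, larger value first.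
Then `lam' ≤_P lamS`. -/
theorem statement5 (a₁ b₁ a₂ b₂ : ℝ) (d₁ d₂ c : ℕ)
    (hd₁ : 1 ≤ d₁) (hd₂ : 1 ≤ d₂) (hc : 1 ≤ c)
    (h₁ : a₁ = a₂ + d₁) (h₂ : a₂ = b₁ + c) (h₃ : b₁ = b₂ + d₂)
    (L : List (ℝ × ℕ)) (hL : L ≠ [])
    (hmult : (L.map (fun s => segMultiset s.1 s.2)).sum
      = segMultiset a₁ (d₁ + c) + segMultiset a₂ (c + d₂))
    (hchain : L.Chain' (fun s t => segMid t.1 t.2 ≤ segMid s.1 s.2))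
    (lamS lam' : Fin (d₁ + c + 1 + (c + d₂ + 1)) → ℝ)
    (hlamS : ∀ i : Fin (d₁ + c + 1 + (c + d₂ + 1)),
      lamS i = (segBlocks L).getD (i : ℕ) 0)
    (hlam' : ∀ i : Fin (d₁ + c + 1 + (c + d₂ + 1)),
      lam' i =
        if (a₂ + b₁) / 2 ≤ (a₁ + b₂) / 2 then
          (if (i : ℕ) < d₁ + c + d₂ + 1 then (a₁ + b₂) / 2 else (a₂ + b₁) / 2)
        else
          (if (i : ℕ) < c + 1 then (a₂ + b₁) / 2 else (a₁ + b₂) / 2)) :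
    (∑ i, lamS i = ∑ i, lam' i) ∧
    ∀ k : Fin (d₁ + c + 1 + (c + d₂ + 1)),
      0 ≤ ∑ i ∈ Finset.Iic k, (lamS i - lam' i) := by
  classical
  have hd₁' : (1:ℝ) ≤ d₁ := by exact_mod_cast hd₁
  have hd₂' : (1:ℝ) ≤ d₂ := by exact_mod_cast hd₂
  have hc' : (1:ℝ) ≤ c := by exact_mod_cast hc
  revert hlamS hlam'
  revert lamS lam'
  set N : ℕ := d₁ + c + 1 + (c + d₂ + 1) with hNdef
  set U : ℕ := d₁ + c + d₂ + 1 with hUdef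
  intro lamS lam' hlamS hlam'
  have hUN : U ≤ N := by omega
  have hcN : c + 1 ≤ N := by omega
  have hNU : N - U = c + 1 := by omega
  have hNc : N - (c+1) = U := by omega
  set bl : List ℝ := segBlocks L with hbl
  have hmult' : msum L = segMultiset a₁ (d₁ + c) + segMultiset a₂ (c + d₂) := hmult
  have hlen : bl.length = N := by
    rw [hbl, length_segBlocks, hmult', Multiset.card_add, seg_card, seg_card]
    try omega
  haveI : IsTrans (ℝ × ℕ) (fun s t => segMid t.1 t.2 ≤ segMid s.1 s.2) :=
    ⟨fun a b c hab hbc => le_trans hbc hab⟩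
  have hpairw : L.Pairwise (fun s t => segMid t.1 t.2 ≤ segMid s.1 s.2) :=
    List.isChain_iff_pairwise.mp hchain
  have hsorted : bl.Pairwise (· ≥ ·) := sorted_blocks hpairw
  have he₁ : a₁ = b₂ + (d₂:ℝ) + c + d₁ := by linarith
  have he₂ : a₂ = b₂ + (d₂:ℝ) + c := by linarith
  have he₃ : b₁ = b₂ + (d₂:ℝ) := by linarith
  have hsum_bl : bl.sum = ((U:ℝ)) * ((a₁+b₂)/2) + (((c+1:ℕ)):ℝ) * ((a₂+b₁)/2) := by
    have hb1 : (bl : Multiset ℝ).sum = bl.sum := Multiset.sum_coe bl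
    have hb2 : (bl : Multiset ℝ).sum = (msum L).sum := by
      rw [hbl, blocksM_coe, sum_blocksM]
    rw [← hb1, hb2, hmult', Multiset.sum_add, seg_sum, seg_sum]
    unfold segMid
    rw [he₁, he₂, he₃, hUdef]
    push_cast
    try ring
  -- key inequalities
  have hKI : ((U:ℝ)) * ((a₁+b₂)/2) ≤ Pf bl U := by
    obtain ⟨u, hule, hucard, husum⟩ := keyI hd₁ hd₂ hc h₁ h₂ h₃ L hmult'
    have hucoe : u ≤ (bl : Multiset ℝ) := by rw [hbl, blocksM_coe]; exact hule
    have := prefix_max hsorted u hucoe (by rw [hucard, hlen]; exact hUN)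
    rw [hucard] at this
    exact le_trans husum this
  have hKII : (((c+1:ℕ)):ℝ) * ((a₂+b₁)/2) ≤ Pf bl (c+1) := by
    obtain ⟨u, hule, hucard, husum⟩ := keyII hd₁ hd₂ hc h₁ h₂ h₃ L hmult'
    have hucoe : u ≤ (bl : Multiset ℝ) := by rw [hbl, blocksM_coe]; exact hule
    have := prefix_max hsorted u hucoe (by rw [hucard, hlen]; exact hcN)
    rw [hucard] at this
    exact le_trans husum this
  have hlamS_sumrange : ∀ r : ℕ, r ≤ N →
      ∀ k : Fin N, (k:ℕ) + 1 = r →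
      ∑ i ∈ Finset.Iic k, (lamS i - lam' i)
        = Pf bl r - ∑ j ∈ Finset.range r,
            (if (a₂ + b₁) / 2 ≤ (a₁ + b₂) / 2 then
              (if j < U then (a₁ + b₂) / 2 else (a₂ + b₁) / 2)
            else
              (if j < c + 1 then (a₂ + b₁) / 2 else (a₁ + b₂) / 2)) := by
    intro r hrN k hkr
    have hcongr : ∑ i ∈ Finset.Iic k, (lamS i - lam' i)
        = ∑ i ∈ Finset.Iic k, (fun j : ℕ => bl.getD j 0 -
            (if (a₂ + b₁) / 2 ≤ (a₁ + b₂) / 2 then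
              (if j < U then (a₁ + b₂) / 2 else (a₂ + b₁) / 2)
            else
              (if j < c + 1 then (a₂ + b₁) / 2 else (a₁ + b₂) / 2))) (i : ℕ) := by
      refine Finset.sum_congr rfl (fun i _ => ?_)
      rw [hlamS i, hlam' i]
    rw [hcongr, sum_Iic_fin k (fun j : ℕ => bl.getD j 0 -
            (if (a₂ + b₁) / 2 ≤ (a₁ + b₂) / 2 then
              (if j < U then (a₁ + b₂) / 2 else (a₂ + b₁) / 2)
            else
              (if j < c + 1 then (a₂ + b₁) / 2 else (a₁ + b₂) / 2))),
      hkr, Finset.sum_sub_distrib]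
    rfl
  constructor
  · -- total sums agree
    have hS : ∑ i, lamS i = bl.sum := by
      have h1 : ∑ i, lamS i = ∑ i : Fin N, bl.getD (i:ℕ) 0 :=
        Finset.sum_congr rfl (fun i _ => hlamS i)
      rw [h1, Fin.sum_univ_eq_sum_range (fun j => bl.getD j 0) N]
      rw [show (∑ j ∈ Finset.range N, bl.getD j 0) = Pf bl N from rfl]
      rw [Pf_of_le_length (le_of_eq hlen)]
    by_cases hcond : (a₂ + b₁) / 2 ≤ (a₁ + b₂) / 2
    · have h2 : ∑ i, lam' i
          = ∑ j ∈ Finset.range N, (if j < U then (a₁+b₂)/2 else (a₂+b₁)/2) := by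
        have h1 : ∑ i, lam' i = ∑ i : Fin N,
            (fun j : ℕ => if j < U then (a₁+b₂)/2 else (a₂+b₁)/2) (i:ℕ) := by
          refine Finset.sum_congr rfl (fun i _ => ?_)
          rw [hlam' i, if_pos hcond]
        rw [h1, Fin.sum_univ_eq_sum_range (fun j : ℕ => if j < U then (a₁+b₂)/2 else (a₂+b₁)/2) N]
      rw [hS, h2, sum_range_ite, show min U N = U by omega, hNU, hsum_bl]
    · have h2 : ∑ i, lam' i
          = ∑ j ∈ Finset.range N, (if j < c+1 then (a₂+b₁)/2 else (a₁+b₂)/2) := by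
        have h1 : ∑ i, lam' i = ∑ i : Fin N,
            (fun j : ℕ => if j < c+1 then (a₂+b₁)/2 else (a₁+b₂)/2) (i:ℕ) := by
          refine Finset.sum_congr rfl (fun i _ => ?_)
          rw [hlam' i, if_neg hcond]
        rw [h1, Fin.sum_univ_eq_sum_range (fun j : ℕ => if j < c+1 then (a₂+b₁)/2 else (a₁+b₂)/2) N]
      rw [hS, h2, sum_range_ite, show min (c+1) N = c+1 by omega, hNc, hsum_bl]
      ring
  · -- partial sums
    intro k
    set r : ℕ := (k:ℕ) + 1 with hrdef
    have hrN : r ≤ N := k.isLt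
    have hrpos : 1 ≤ r := by omega
    have hrcast : ((r:ℕ):ℝ) = ((k:ℕ):ℝ) + 1 := by rw [hrdef]; push_cast; ring
    have hrw := hlamS_sumrange r hrN k rfl
    rw [hrw]
    by_cases hcond : (a₂ + b₁) / 2 ≤ (a₁ + b₂) / 2
    · have hQ : ∑ j ∈ Finset.range r,
          (if (a₂ + b₁) / 2 ≤ (a₁ + b₂) / 2 then
            (if j < U then (a₁ + b₂) / 2 else (a₂ + b₁) / 2)
          else
            (if j < c + 1 then (a₂ + b₁) / 2 else (a₁ + b₂) / 2))
          = ((min U r : ℕ):ℝ) * ((a₁+b₂)/2) + ((r - U : ℕ):ℝ) * ((a₂+b₁)/2) := by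
        rw [Finset.sum_congr rfl (fun j _ => if_pos hcond), sum_range_ite]
      rw [hQ]
      by_cases hru : r ≤ U
      · rw [show min U r = r by omega, show r - U = 0 by omega]
        push_cast
        have hU0 : (0:ℝ) < (U:ℝ) := by
          have : (1:ℕ) ≤ U := by omega
          exact_mod_cast Nat.lt_of_lt_of_le Nat.zero_lt_one this
        have hpa := prefix_avg hsorted hru (by rw [hlen]; omega : U ≤ bl.length)
        have hr0 : (0:ℝ) ≤ (r:ℝ) := by positivity
        have h1 : (r:ℝ) * ((U:ℝ) * ((a₁+b₂)/2)) ≤ (r:ℝ) * Pf bl U :=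
          mul_le_mul_of_nonneg_left hKI hr0
        have hfin : (U:ℝ) * ((r:ℝ) * ((a₁+b₂)/2)) ≤ (U:ℝ) * Pf bl r := by nlinarith
        have := le_of_mul_le_mul_left hfin hU0
        linarith
      · rw [show min U r = U by omega]
        have hq : N - r ≤ c + 1 := by omega
        have hsa := suffix_avg hsorted hq (by rw [hlen]; omega : c + 1 ≤ bl.length)
        rw [hlen, show N - (N - r) = r by omega, hNc] at hsa
        have hq0 : (0:ℝ) ≤ ((N - r : ℕ):ℝ) := by positivity
        have h1 : bl.sum - Pf bl U ≤ (((c+1:ℕ)):ℝ) * ((a₂+b₁)/2) := by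
          rw [hsum_bl]; linarith
        have h2 : ((N - r : ℕ):ℝ) * (bl.sum - Pf bl U)
            ≤ ((N - r : ℕ):ℝ) * ((((c+1:ℕ)):ℝ) * ((a₂+b₁)/2)) :=
          mul_le_mul_of_nonneg_left h1 hq0
        have hc0 : (0:ℝ) < (((c+1:ℕ)):ℝ) := by
          have : (1:ℕ) ≤ c+1 := by omega
          exact_mod_cast Nat.lt_of_lt_of_le Nat.zero_lt_one this
        have hfin : (((c+1:ℕ)):ℝ) * (bl.sum - Pf bl r)
            ≤ (((c+1:ℕ)):ℝ) * (((N - r : ℕ):ℝ) * ((a₂+b₁)/2)) := by nlinarith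
        have hmain := le_of_mul_le_mul_left hfin hc0
        have hcast1 : ((N - r : ℕ):ℝ) = (N:ℝ) - r := by
          push_cast [Nat.cast_sub (by omega : r ≤ N)]; ring
        have hcast2 : ((r - U : ℕ):ℝ) = (r:ℝ) - U := by
          push_cast [Nat.cast_sub (by omega : U ≤ r)]; ring
        have hcast3 : ((c+1:ℕ):ℝ) = (N:ℝ) - U := by
          have : c + 1 = N - U := by omega
          rw [this]
          push_cast [Nat.cast_sub (by omega : U ≤ N)]; ring
        rw [hsum_bl] at hmain
        rw [hcast2]
        rw [hcast1, hcast3] at hmain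
        linarith [hrcast]
    · have hQ : ∑ j ∈ Finset.range r,
          (if (a₂ + b₁) / 2 ≤ (a₁ + b₂) / 2 then
            (if j < U then (a₁ + b₂) / 2 else (a₂ + b₁) / 2)
          else
            (if j < c + 1 then (a₂ + b₁) / 2 else (a₁ + b₂) / 2))
          = ((min (c+1) r : ℕ):ℝ) * ((a₂+b₁)/2) + ((r - (c+1) : ℕ):ℝ) * ((a₁+b₂)/2) := by
        rw [Finset.sum_congr rfl (fun j _ => if_neg hcond), sum_range_ite]
      rw [hQ]
      by_cases hru : r ≤ c + 1
      · rw [show min (c+1) r = r by omega, show r - (c+1) = 0 by omega]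
        push_cast
        have hc0 : (0:ℝ) < ((c:ℝ)+1) := by positivity
        have hpa := prefix_avg hsorted hru (by rw [hlen]; omega : c + 1 ≤ bl.length)
        have hr0 : (0:ℝ) ≤ (r:ℝ) := by positivity
        have hKII' : ((c:ℝ)+1) * ((a₂+b₁)/2) ≤ Pf bl (c+1) := by
          have : (((c+1:ℕ)):ℝ) = (c:ℝ)+1 := by push_cast; ring
          rw [← this]; exact hKII
        have h1 : (r:ℝ) * (((c:ℝ)+1) * ((a₂+b₁)/2)) ≤ (r:ℝ) * Pf bl (c+1) :=
          mul_le_mul_of_nonneg_left hKII' hr0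
        have hpa' : (r:ℝ) * Pf bl (c+1) ≤ ((c:ℝ)+1) * Pf bl r := by
          have : (((c+1:ℕ)):ℝ) = (c:ℝ)+1 := by push_cast; ring
          rw [← this]
          exact_mod_cast hpa
        have hfin : ((c:ℝ)+1) * ((r:ℝ) * ((a₂+b₁)/2)) ≤ ((c:ℝ)+1) * Pf bl r := by nlinarith
        have := le_of_mul_le_mul_left hfin hc0
        linarith
      · rw [show min (c+1) r = c+1 by omega]
        have hq : N - r ≤ U := by omega
        have hsa := suffix_avg hsorted hq (by rw [hlen]; omega : U ≤ bl.length)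
        rw [hlen, show N - (N - r) = r by omega, hNU] at hsa
        have hq0 : (0:ℝ) ≤ ((N - r : ℕ):ℝ) := by positivity
        have h1 : bl.sum - Pf bl (c+1) ≤ ((U:ℕ):ℝ) * ((a₁+b₂)/2) := by
          rw [hsum_bl]; linarith
        have h2 : ((N - r : ℕ):ℝ) * (bl.sum - Pf bl (c+1))
            ≤ ((N - r : ℕ):ℝ) * (((U:ℕ):ℝ) * ((a₁+b₂)/2)) :=
          mul_le_mul_of_nonneg_left h1 hq0
        have hU0 : (0:ℝ) < ((U:ℕ):ℝ) := by
          have : (1:ℕ) ≤ U := by omega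
          exact_mod_cast Nat.lt_of_lt_of_le Nat.zero_lt_one this
        have hfin : ((U:ℕ):ℝ) * (bl.sum - Pf bl r)
            ≤ ((U:ℕ):ℝ) * (((N - r : ℕ):ℝ) * ((a₁+b₂)/2)) := by nlinarith
        have hmain := le_of_mul_le_mul_left hfin hU0
        have hcast1 : ((N - r : ℕ):ℝ) = (N:ℝ) - r := by
          push_cast [Nat.cast_sub (by omega : r ≤ N)]; ring
        have hcast2 : ((r - (c+1) : ℕ):ℝ) = (r:ℝ) - ((c:ℝ)+1) := by
          push_cast [Nat.cast_sub (by omega : c+1 ≤ r)]; ring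
        have hcast3 : ((U:ℕ):ℝ) = (N:ℝ) - ((c:ℝ)+1) := by
          have : U = N - (c+1) := by omega
          rw [this]
          push_cast [Nat.cast_sub (by omega : c+1 ≤ N)]; ring
        rw [hsum_bl] at hmain
        rw [hcast2]
        rw [hcast1, hcast3] at hmain
        push_cast at hmain ⊢
        linarith [hrcast]
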